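/- If an assertion A is self-framing and A frames an assertion B, then the separating conjunction A * B is self-framing. -/
import Mathlib

/-- An IDF algebra: a partial commutative monoid with core, stability predicate
and stabilization, satisfying the axioms of Dardinier et al.
Partiality of `⊕` is modeled via `Option`; `op a b = some c` asserts that
`a ⊕ b` is defined and equals `c`. -/
structure IDF (α : Type) where
  op : α → α → Option α
  core : α → α
  stable : α → Prop
  stabilize : α → α
  comm : ∀ a b, op a b = op b a
  assoc : ∀ a b c, (op a b).bind (fun x => op x c) = (op b c).bind (fun y => op a y)
  positivity : ∀ a b c, op a b = some c → op c c = some c → op a a = some a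
  core_self : ∀ x, op x (core x) = some x
  core_dup : ∀ x, op (core x) (core x) = some (core x)
  core_max : ∀ x c, op x c = some x → ∃ r, op c r = some (core x)
  core_add : ∀ a b c, op a b = some c → op (core a) (core b) = some (core c)
  cancel : ∀ x a b w, op x a = some w → op x b = some w → core a = core b → a = b
  stable_stabilize : ∀ ω, stable ω → stabilize ω = ω
  stabilize_stable : ∀ ω, stable (stabilize ω)
  stabilize_add : ∀ a b c, op a b = some c → op (stabilize a) (stabilize b) = some (stabilize c)
  stabilize_core : ∀ x, op (stabilize x) (core x) = some x
  stabilize_core_unit : ∀ a b c, op b (stabilize (core c)) = some a → a = b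

namespace IDF

variable {α : Type}

/-- `Alg.ge x y` means `x ⪰ y`, i.e. `∃ r, x = y ⊕ r`. -/
def ge (Alg : IDF α) (x y : α) : Prop := ∃ r, Alg.op y r = some x

/-- Separating conjunction of (semantic) assertions. -/
def star (Alg : IDF α) (P Q : Set α) : Set α :=
  {ω | ∃ p ∈ P, ∃ q ∈ Q, Alg.op p q = some ω}

/-- `P` is self-framing. -/
def selfFraming (Alg : IDF α) (P : Set α) : Prop :=
  ∀ ω, ω ∈ P ↔ Alg.stabilize ω ∈ P

/-- The state `ω` frames the assertion `P`. -/
def framesState (Alg : IDF α) (ω : α) (P : Set α) : Prop :=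
  Alg.selfFraming (Alg.star {ω} P)

/-- The assertion `B` frames the assertion `P`: every stable state of `B` frames `P`. -/
def framesAssert (Alg : IDF α) (B P : Set α) : Prop :=
  ∀ ω ∈ B, Alg.stable ω → Alg.framesState ω P

end IDF

/-- Key lemma: if `a ⊕ b = w` and `S := {stabilize a} * B` is self-framing with `b ∈ B`,
then `stabilize w ∈ S`. -/
theorem idf_key {α : Type} (Alg : IDF α) (B : Set α) (a b w : α) (hb : b ∈ B)
    (hw : Alg.op a b = some w)
    (hS : Alg.selfFraming (Alg.star {Alg.stabilize a} B)) :
    Alg.stabilize w ∈ Alg.star {Alg.stabilize a} B := by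
  -- decompose a = stabilize a ⊕ core a
  have hdec := Alg.stabilize_core a
  -- assoc: (b ⊕ stabilize a) ⊕ core a = b ⊕ (stabilize a ⊕ core a) = b ⊕ a = w
  have hassoc := Alg.assoc b (Alg.stabilize a) (Alg.core a)
  rw [hdec] at hassoc
  have hba : Alg.op b a = some w := by rw [Alg.comm]; exact hw
  simp only [Option.bind_some] at hassoc
  rw [hba] at hassoc
  -- extract ν with op b (stabilize a) = some ν and op ν (core a) = some w
  obtain ⟨ν, hν1, hν2⟩ : ∃ ν, Alg.op b (Alg.stabilize a) = some ν ∧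
      Alg.op ν (Alg.core a) = some w := by
    cases h : Alg.op b (Alg.stabilize a) with
    | none => rw [h] at hassoc; simp at hassoc
    | some ν => rw [h] at hassoc; exact ⟨ν, rfl, hassoc⟩
  -- stabilize: stabilize ν ⊕ stabilize (core a) = stabilize w
  have hstab := Alg.stabilize_add ν (Alg.core a) w hν2
  have heq : Alg.stabilize w = Alg.stabilize ν :=
    Alg.stabilize_core_unit _ _ a hstab
  -- ν ∈ S
  have hνS : ν ∈ Alg.star {Alg.stabilize a} B :=
    ⟨Alg.stabilize a, rfl, b, hb, by rw [Alg.comm]; exact hν1⟩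
  rw [heq]
  exact (hS ν).mp hνS

/-- if `A` is self-framing and `A` frames `B`,
then `A * B` is self-framing. -/
theorem idf_star_selfFraming {α : Type} (Alg : IDF α) (A B : Set α)
    (hA : Alg.selfFraming A) (hAB : Alg.framesAssert A B) :
    Alg.selfFraming (Alg.star A B) := by
  intro ω
  constructor
  · rintro ⟨a, ha, b, hb, hab⟩
    have haA : Alg.stabilize a ∈ A := (hA a).mp ha
    have hS := hAB _ haA (Alg.stabilize_stable a)
    obtain ⟨p, hp, q, hq, hpq⟩ := idf_key Alg B a b ω hb hab hS
    exact ⟨p, hp ▸ haA, q, hq, hpq⟩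
  · rintro ⟨a, ha, b, hb, hab⟩
    have haA : Alg.stabilize a ∈ A := (hA a).mp ha
    have hS := hAB _ haA (Alg.stabilize_stable a)
    -- stabilize ω is stable, so stabilize (stabilize ω) = stabilize ω
    have hid : Alg.stabilize (Alg.stabilize ω) = Alg.stabilize ω :=
      Alg.stable_stabilize _ (Alg.stabilize_stable ω)
    have hkey := idf_key Alg B a b (Alg.stabilize ω) hb hab hS
    rw [hid] at hkey
    -- self-framing of S: ω ∈ S ↔ stabilize ω ∈ S
    obtain ⟨p, hp, q, hq, hpq⟩ := (hS ω).mpr hkey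
    exact ⟨p, hp ▸ haA, q, hq, hpq⟩
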